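/- Let p ≥ 5 be a prime, and let m, n ≥ 0 and 0 ≤ r < p be integers. Then C(p*(n+m)+r, p*m+r) ≡ C(n+m,m) * (1 + n*(C(p+r,r) - 1)) (mod p^2). -/

import Mathlib

open Finset

private lemma dvd_choose_mul9 {p : ℕ} (hp : p.Prime) (a k : ℕ) (hk : ¬ p ∣ k) :
    p ∣ (p * a).choose k := by
  haveI : Fact p.Prime := ⟨hp⟩
  have h := Choose.choose_modEq_choose_mod_mul_choose_div_nat (p := p) (n := p * a) (k := k)
  rw [Nat.mul_mod_right] at h
  have hk0 : 0 < k % p := Nat.pos_of_ne_zero fun h0 => hk (Nat.dvd_of_mod_eq_zero h0)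
  rw [Nat.choose_eq_zero_of_lt hk0, zero_mul] at h
  exact (Nat.modEq_zero_iff_dvd).mp h

private lemma step9 {p : ℕ} (hp : p.Prime) (a b : ℕ) :
    (((p * (a + 1)).choose (p * (b + 1)) : ZMod (p ^ 2)))
      = ((p * a).choose (p * (b + 1)) : ZMod (p ^ 2)) + ((p * a).choose (p * b) : ZMod (p ^ 2)) := by
  have hp0 : 0 < p := hp.pos
  have hpp : ((p * p : ℕ) : ZMod (p ^ 2)) = 0 := by rw [← pow_two, ZMod.natCast_self]
  have hexp : (p * (a + 1)) = p * a + p := by ring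
  have hq : p * (b + 1) = p * b + p := by ring
  rw [hexp, Nat.add_choose_eq, Nat.cast_sum, Finset.Nat.sum_antidiagonal_eq_sum_range_succ_mk]
  have hne : p * b ≠ p * (b + 1) := by omega
  have hsub : ({p * b, p * (b + 1)} : Finset ℕ) ⊆ range (p * (b + 1) + 1) := by
    intro x hx
    simp only [Finset.mem_insert, Finset.mem_singleton] at hx
    rcases hx with h | h <;> simp [h] <;> omega
  have hzero : ∀ i ∈ range (p * (b + 1) + 1), i ∉ ({p * b, p * (b + 1)} : Finset ℕ) →
      (((p * a).choose (i, p * (b + 1) - i).1 * p.choose (i, p * (b + 1) - i).2 : ℕ)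
        : ZMod (p ^ 2)) = 0 := by
    intro i hi hnot
    simp only [Finset.mem_insert, Finset.mem_singleton, not_or] at hnot
    rw [Finset.mem_range] at hi
    simp only []
    have hile : i ≤ p * (b + 1) := by omega
    by_cases hdvd : p ∣ i
    · obtain ⟨c, rfl⟩ := hdvd
      have hcb1 : c ≤ b + 1 := Nat.le_of_mul_le_mul_left hile hp0
      have hc1 : c ≠ b := fun h => hnot.1 (by rw [h])
      have hc2 : c ≠ b + 1 := fun h => hnot.2 (by rw [h])
      have hcb : c < b := by omega
      have hsplit : p * (b + 1) = p * c + p * (b + 1 - c) := by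
        rw [← Nat.mul_add]; congr 1; omega
      have h2 : 2 ≤ b + 1 - c := by omega
      have hplt : p < p * (b + 1 - c) := by
        calc p < p * 2 := by omega
        _ ≤ p * (b + 1 - c) := Nat.mul_le_mul_left p h2
      have : p < p * (b + 1) - p * c := by omega
      rw [Nat.choose_eq_zero_of_lt this, mul_zero, Nat.cast_zero]
    · have h1 : p ∣ (p * a).choose i := dvd_choose_mul9 hp a i hdvd
      set j := p * (b + 1) - i with hj
      have hij : i + j = p * (b + 1) := by omega
      have hjd : ¬ p ∣ j := by
        intro hd
        apply hdvd
        have : i = p * (b + 1) - j := by omega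
        rw [this]
        exact Nat.dvd_sub ⟨b + 1, rfl⟩ hd
      rcases lt_trichotomy j p with hlt | heq | hgt
      · have hj0 : j ≠ 0 := fun h => hjd (h ▸ dvd_zero p)
        have h2 : p ∣ p.choose j := hp.dvd_choose_self hj0 hlt
        obtain ⟨x, hx⟩ := h1
        obtain ⟨y, hy⟩ := h2
        rw [hx, hy, show p * x * (p * y) = p * p * (x * y) by ring, Nat.cast_mul, hpp, zero_mul]
      · exact absurd (heq ▸ dvd_refl p) hjd
      · rw [Nat.choose_eq_zero_of_lt hgt, mul_zero, Nat.cast_zero]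
  rw [← Finset.sum_subset hsub hzero, Finset.sum_pair hne]
  have e1 : p * (b + 1) - p * b = p := by omega
  have e2 : p * (b + 1) - p * (b + 1) = 0 := by omega
  simp only [e1, e2, Nat.choose_self, Nat.choose_zero_right, mul_one]
  push_cast
  ring

private def e9 : ℕ → ℕ
  | 0 => 0
  | r + 1 => (r + 1) * e9 r + r.factorial

private lemma desc9 {p : ℕ} (X : ℕ) :
    ∀ r : ℕ, (((p * X + r).descFactorial r : ℕ) : ZMod (p ^ 2))
      = (r.factorial : ZMod (p ^ 2)) + (p : ZMod (p ^ 2)) * X * e9 r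
  | 0 => by simp [e9]
  | r + 1 => by
    have hpp : ((p : ZMod (p ^ 2)) * p) = 0 := by
      rw [← Nat.cast_mul, ← pow_two, ZMod.natCast_self]
    have : p * X + (r + 1) = (p * X + r) + 1 := by ring
    rw [this, Nat.succ_descFactorial_succ, Nat.cast_mul, desc9 X r]
    rw [show e9 (r + 1) = (r + 1) * e9 r + r.factorial from rfl, Nat.factorial_succ]
    push_cast
    linear_combination ((X : ZMod (p ^ 2)) ^ 2 * (e9 r : ZMod (p ^ 2))) * hpp

private lemma natid9 (p m n r : ℕ) :
    (p * (n + m) + r).choose (p * m + r) * (p * m + r).descFactorial r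
      = (p * (n + m)).choose (p * m) * (p * (n + m) + r).descFactorial r := by
  have e1 : (p * m).factorial * (p * m + r).descFactorial r = (p * m + r).factorial := by
    have := Nat.factorial_mul_descFactorial (n := p * m + r) (k := r) (Nat.le_add_left r (p * m))
    simpa using this
  have e2 : (p * (n + m)).factorial * (p * (n + m) + r).descFactorial r
      = (p * (n + m) + r).factorial := by
    have := Nat.factorial_mul_descFactorial (n := p * (n + m) + r) (k := r)
      (Nat.le_add_left r (p * (n + m)))
    simpa using this
  have hle : p * m + r ≤ p * (n + m) + r := by
    have : p * m ≤ p * (n + m) := Nat.mul_le_mul_left p (by omega)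
    omega
  have hsub : (p * (n + m) + r) - (p * m + r) = p * n := by
    rw [Nat.mul_add]; omega
  have e3 : (p * (n + m) + r).choose (p * m + r) * (p * m + r).factorial * (p * n).factorial
      = (p * (n + m) + r).factorial := by
    have := Nat.choose_mul_factorial_mul_factorial hle
    rwa [hsub] at this
  have hle2 : p * m ≤ p * (n + m) := Nat.mul_le_mul_left p (by omega)
  have hsub2 : p * (n + m) - p * m = p * n := by rw [Nat.mul_add]; omega
  have e4 : (p * (n + m)).choose (p * m) * (p * m).factorial * (p * n).factorial
      = (p * (n + m)).factorial := by
    have := Nat.choose_mul_factorial_mul_factorial hle2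
    rwa [hsub2] at this
  apply Nat.eq_of_mul_eq_mul_right (Nat.mul_pos (Nat.factorial_pos (p * m)) (Nat.factorial_pos (p * n)))
  calc (p * (n + m) + r).choose (p * m + r) * (p * m + r).descFactorial r
        * ((p * m).factorial * (p * n).factorial)
      = (p * (n + m) + r).choose (p * m + r)
          * ((p * m).factorial * (p * m + r).descFactorial r) * (p * n).factorial := by ring
    _ = (p * (n + m) + r).factorial := by rw [e1]; exact e3
    _ = (p * (n + m)).factorial * (p * (n + m) + r).descFactorial r := e2.symm
    _ = (p * (n + m)).choose (p * m) * (p * (n + m) + r).descFactorial r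
          * ((p * m).factorial * (p * n).factorial) := by rw [← e4]; ring

private lemma cdesc9 (p r : ℕ) :
    (p + r).choose r * r.factorial = (p + r).descFactorial r := by
  have e1 : p.factorial * (p + r).descFactorial r = (p + r).factorial := by
    have := Nat.factorial_mul_descFactorial (n := p + r) (k := r) (Nat.le_add_left r p)
    simpa using this
  have e2 : (p + r).choose r * r.factorial * p.factorial = (p + r).factorial := by
    have h := Nat.choose_mul_factorial_mul_factorial (Nat.le_add_left r p)
    rwa [Nat.add_sub_cancel] at h
  apply Nat.eq_of_mul_eq_mul_right (Nat.factorial_pos p)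
  rw [e2, ← e1]; ring

private lemma ndvd9 {p : ℕ} (hp : p.Prime) (m : ℕ) :
    ∀ r : ℕ, r < p → ¬ p ∣ (p * m + r).descFactorial r
  | 0, _ => by simpa using hp.one_lt.ne'
  | r + 1, h => by
    have hi : ¬ p ∣ (p * m + r).descFactorial r := ndvd9 hp m r (by omega)
    rw [show p * m + (r + 1) = (p * m + r) + 1 from by ring, Nat.succ_descFactorial_succ]
    intro hdvd
    rcases (Nat.Prime.dvd_mul hp).mp hdvd with h1 | h2
    · have : p ∣ r + 1 := by
        have h3 : p ∣ (p * m + r + 1) - p * m := Nat.dvd_sub h1 ⟨m, rfl⟩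
        have h4 : (p * m + r + 1) - p * m = r + 1 := by omega
        rwa [h4] at h3
      exact absurd (Nat.le_of_dvd (by omega) this) (by omega)
    · exact hi h2

private lemma lucas2_9 {p : ℕ} (hp : p.Prime)
    (step : ∀ a b : ℕ, (((p * (a + 1)).choose (p * (b + 1)) : ZMod (p ^ 2)))
      = ((p * a).choose (p * (b + 1)) : ZMod (p ^ 2)) + ((p * a).choose (p * b) : ZMod (p ^ 2))) :
    ∀ a b : ℕ, ((p * a).choose (p * b) : ZMod (p ^ 2)) = (a.choose b : ZMod (p ^ 2)) := by
  intro a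
  induction a with
  | zero =>
    intro b
    cases b with
    | zero => simp
    | succ c =>
      rw [Nat.mul_zero, Nat.choose_eq_zero_of_lt (Nat.mul_pos hp.pos (Nat.succ_pos c)), Nat.choose_eq_zero_of_lt (by omega)]
  | succ a ih =>
    intro b
    cases b with
    | zero => simp
    | succ c =>
      rw [step a c, ih, ih, Nat.choose_succ_succ]
      push_cast
      ring

theorem stmt_9 (p : ℕ) (hp : p.Prime) (hp5 : 5 ≤ p) (m n r : ℕ) (hr : r < p) :
    (((p * (n + m) + r).choose (p * m + r) : ℤ))
      ≡ ((n + m).choose m : ℤ) * (1 + (n : ℤ) * (((p + r).choose r : ℤ) - 1))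
        [ZMOD ((p : ℤ) ^ 2)] := by
  haveI : Fact p.Prime := ⟨hp⟩
  haveI : NeZero (p ^ 2) := ⟨pow_ne_zero 2 hp.pos.ne'⟩
  have hmod : ((p : ℤ) ^ 2) = ((p ^ 2 : ℕ) : ℤ) := by push_cast; ring
  rw [hmod, ← ZMod.intCast_eq_intCast_iff]
  push_cast
  set R := ZMod (p ^ 2) with hR
  have hpp : ((p : R) * p) = 0 := by
    rw [← Nat.cast_mul, ← pow_two, ZMod.natCast_self]
  have h1 : (((p * (n + m) + r).choose (p * m + r) : ℕ) : R)
      * (((p * m + r).descFactorial r : ℕ) : R)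
      = (((p * (n + m)).choose (p * m) : ℕ) : R)
      * (((p * (n + m) + r).descFactorial r : ℕ) : R) := by
    simpa only [Nat.cast_mul] using congrArg (Nat.cast : ℕ → R) (natid9 p m n r)
  have hL := lucas2_9 hp (step9 hp) (n + m) m
  have hd1 := desc9 (p := p) m r
  have hd2 := desc9 (p := p) (n + m) r
  rw [hL, hd1, hd2] at h1
  push_cast at h1
  have hc : (((p + r).choose r : ℕ) : R) * (r.factorial : R)
      = (r.factorial : R) + (p : R) * (e9 r : R) := by
    have hcd : (((p + r).choose r * r.factorial : ℕ) : R)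
        = (((p + r).descFactorial r : ℕ) : R) := by exact_mod_cast congrArg _ (cdesc9 p r)
    have hdd := desc9 (p := p) 1 r
    simp only [mul_one] at hdd
    rw [Nat.cast_mul] at hcd
    rw [hcd, hdd]
    push_cast
    ring
  set F := (r.factorial : R) with hF
  set E := (e9 r : R) with hE
  set c := (((p + r).choose r : ℕ) : R) with hcdef
  have hδF : F * (c - 1) = (p : R) * E := by linear_combination hc
  have hu1 : IsUnit F := by
    rw [hF, ZMod.isUnit_iff_coprime]
    apply Nat.Coprime.pow_right
    rw [Nat.coprime_comm]
    exact hp.coprime_iff_not_dvd.mpr (by rw [hp.dvd_factorial]; omega)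
  have hu2 : IsUnit (((p * m + r).descFactorial r : ℕ) : R) := by
    rw [ZMod.isUnit_iff_coprime]
    apply Nat.Coprime.pow_right
    rw [Nat.coprime_comm]
    exact hp.coprime_iff_not_dvd.mpr (ndvd9 hp m r hr)
  rw [hd1] at hu2
  have hPδ : (p : R) * (c - 1) = 0 := by
    have h0 : F * ((p : R) * (c - 1)) = F * 0 := by
      linear_combination (p : R) * hδF + E * hpp
    exact hu1.mul_left_cancel h0
  have hukey : IsUnit ((F + (p : R) * m * E) * F) := hu2.mul hu1
  apply hukey.mul_right_cancel
  linear_combination F * h1 - (((n + m).choose m : ℕ) : R) * n * F * hδF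
    - (((n + m).choose m : ℕ) : R) * n * m * E * F * hPδ
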